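/- arXiv:1307.8093 — 3 statements merged into one kernel-verified Lean document; each statement's English description precedes it below -/
import Mathlib

section
/- Let b ∈ z⁻¹ℂ[[z⁻¹]] and b₁ ∈ z⁻²ℂ[[z⁻¹]] be formal power series in z⁻¹ of order at least 1 and at least 2 respectively. Then the equation C_{id−1}φ = C_{id+b}φ + b₁, i.e. φ(z−1) = φ(z+b(z)) + b₁(z), admits one and only one solution φ ∈ z⁻¹ℂ[[z⁻¹]]. -/
open Finset
open scoped Real

noncomputable section

/-- The formal derivative `d/dz` acting on `ℂ[[z⁻¹]]`: here a power series is an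
element of `PowerSeries ℂ` whose `n`-th coefficient represents the coefficient
of `z^{-n}`, and `d/dz (z^{-n}) = -n z^{-n-1}`. -/
def Dz (φ : PowerSeries ℂ) : PowerSeries ℂ :=
  PowerSeries.mk fun n => match n with
    | 0 => 0
    | m + 1 => -(m : ℂ) * PowerSeries.coeff m φ

/-- The composition operator `C_{id-1} : φ(z) ↦ φ(z-1)` on `ℂ[[z⁻¹]]`, defined by
the formal Taylor expansion `Σ_{k≥0} ((-1)^k / k!) (d/dz)^k φ`; since `(d/dz)^k`
raises the order in `z⁻¹` by at least `k`, the `n`-th coefficient only receives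
contributions from `k ≤ n`. -/
def Cm1 (φ : PowerSeries ℂ) : PowerSeries ℂ :=
  PowerSeries.mk fun n => ∑ k ∈ Finset.range (n + 1),
    ((-1 : ℂ) ^ k / (Nat.factorial k : ℂ)) * PowerSeries.coeff n (Dz^[k] φ)

/-- The composition operator `C_{id+b} : φ(z) ↦ φ(z+b(z))` on `ℂ[[z⁻¹]]`, defined
by the formal Taylor expansion `Σ_{k≥0} (b^k / k!) (d/dz)^k φ`; it is well defined
when `b ∈ z⁻¹ℂ[[z⁻¹]]`, in which case the `n`-th coefficient only receives
contributions from `k ≤ n`. -/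
def Cb (b φ : PowerSeries ℂ) : PowerSeries ℂ :=
  PowerSeries.mk fun n => ∑ k ∈ Finset.range (n + 1),
    ((Nat.factorial k : ℂ))⁻¹ * PowerSeries.coeff n (b ^ k * Dz^[k] φ)


lemma coeff_Dz_zero (φ : PowerSeries ℂ) : PowerSeries.coeff 0 (Dz φ) = 0 := by simp [Dz]

lemma coeff_Dz_succ (φ : PowerSeries ℂ) (m : ℕ) :
    PowerSeries.coeff (m + 1) (Dz φ) = -(m : ℂ) * PowerSeries.coeff m φ := by simp [Dz]

/-- Coefficient factor for iterates of `Dz`. -/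
def cc : ℕ → ℕ → ℂ
  | _, 0 => 1
  | 0, _ + 1 => 0
  | n + 1, k + 1 => -(n : ℂ) * cc n k

lemma coeff_Dz_iter (φ : PowerSeries ℂ) (k n : ℕ) :
    PowerSeries.coeff n (Dz^[k] φ) = cc n k * PowerSeries.coeff (n - k) φ := by
  induction k generalizing n with
  | zero => simp [cc]
  | succ k ih =>
    rw [Function.iterate_succ_apply']
    cases n with
    | zero => simp [cc, coeff_Dz_zero]
    | succ m =>
      rw [coeff_Dz_succ, ih m, Nat.succ_sub_succ]
      show -(m:ℂ) * (cc m k * _) = cc (m+1) (k+1) * _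
      rw [show cc (m+1) (k+1) = -(m:ℂ) * cc m k from rfl]
      ring

lemma coeff_pow_eq_zero (b : PowerSeries ℂ) (hb : PowerSeries.coeff 0 b = 0)
    {k i : ℕ} (h : i < k) : PowerSeries.coeff i (b ^ k) = 0 := by
  have hx : PowerSeries.X ∣ b := PowerSeries.X_dvd_iff.mpr
    (by rwa [← PowerSeries.coeff_zero_eq_constantCoeff_apply])
  exact PowerSeries.X_pow_dvd_iff.mp (pow_dvd_pow_of_dvd hx k) i h

/-- The part of the coefficient equation at order `n` not involving `φ_{n-1}`. -/
def tail (b b₁ φ : PowerSeries ℂ) (n : ℕ) : ℂ :=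
  (∑ k ∈ Finset.Ico 1 (n + 1),
      ((Nat.factorial k : ℂ))⁻¹ * PowerSeries.coeff n (b ^ k * Dz^[k] φ))
  + PowerSeries.coeff n b₁
  - ∑ k ∈ Finset.Ico 2 (n + 1),
      ((-1 : ℂ) ^ k / (Nat.factorial k : ℂ)) * PowerSeries.coeff n (Dz^[k] φ)

lemma tail_congr (b b₁ φ φ' : PowerSeries ℂ) (hb : PowerSeries.coeff 0 b = 0) (m : ℕ)
    (h : ∀ j ≤ m, PowerSeries.coeff j φ = PowerSeries.coeff j φ') :
    tail b b₁ φ (m + 2) = tail b b₁ φ' (m + 2) := by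
  have h1 : ∀ k ∈ Finset.Ico 1 (m + 2 + 1),
      ((Nat.factorial k : ℂ))⁻¹ * PowerSeries.coeff (m + 2) (b ^ k * Dz^[k] φ)
        = ((Nat.factorial k : ℂ))⁻¹ * PowerSeries.coeff (m + 2) (b ^ k * Dz^[k] φ') := by
    intro k hk
    simp only [Finset.mem_Ico] at hk
    rw [PowerSeries.coeff_mul, PowerSeries.coeff_mul]
    congr 1
    refine Finset.sum_congr rfl fun p hp => ?_
    have hp : p.1 + p.2 = m + 2 := Finset.HasAntidiagonal.mem_antidiagonal.mp hp
    by_cases hik : p.1 < k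
    · rw [coeff_pow_eq_zero b hb hik]; ring
    · rw [coeff_Dz_iter, coeff_Dz_iter, h (p.2 - k) (by omega)]
  have h2 : ∀ k ∈ Finset.Ico 2 (m + 2 + 1),
      ((-1 : ℂ) ^ k / (Nat.factorial k : ℂ)) * PowerSeries.coeff (m + 2) (Dz^[k] φ)
        = ((-1 : ℂ) ^ k / (Nat.factorial k : ℂ)) * PowerSeries.coeff (m + 2) (Dz^[k] φ') := by
    intro k hk
    simp only [Finset.mem_Ico] at hk
    rw [coeff_Dz_iter, coeff_Dz_iter, h (m + 2 - k) (by omega)]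
  unfold tail
  rw [Finset.sum_congr rfl h1, Finset.sum_congr rfl h2]

lemma coeff_eq_iff (b b₁ φ : PowerSeries ℂ) (m : ℕ) :
    PowerSeries.coeff (m + 2) (Cm1 φ) = PowerSeries.coeff (m + 2) (Cb b φ + b₁) ↔
      ((m : ℂ) + 1) * PowerSeries.coeff (m + 1) φ = tail b b₁ φ (m + 2) := by
  have hset1 : Finset.range (m + 2 + 1) = insert 0 (insert 1 (Finset.Ico 2 (m + 2 + 1))) := by
    ext x; simp; omega
  have hset2 : Finset.Ico 1 (m + 2 + 1) = insert 1 (Finset.Ico 2 (m + 2 + 1)) := by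
    ext x; simp; omega
  have h0 : (0:ℕ) ∉ insert 1 (Finset.Ico 2 (m + 2 + 1)) := by simp
  have h1 : (1:ℕ) ∉ Finset.Ico 2 (m + 2 + 1) := by simp
  rw [map_add]
  simp only [Cm1, Cb, PowerSeries.coeff_mk]
  unfold tail
  rw [hset1, hset2, Finset.sum_insert h0, Finset.sum_insert h1, Finset.sum_insert h0,
    Finset.sum_insert h1]
  simp only [Function.iterate_one, Function.iterate_zero, id_eq, pow_zero, pow_one,
    Nat.factorial_zero, Nat.factorial_one, Nat.cast_one, one_mul, inv_one, one_mul]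
  rw [coeff_Dz_succ φ (m + 1)]
  constructor <;> intro h <;> push_cast at h ⊢ <;> linear_combination h

lemma coeff_zero_eq (b b₁ φ : PowerSeries ℂ) (hb₁ : PowerSeries.coeff 0 b₁ = 0) :
    PowerSeries.coeff 0 (Cm1 φ) = PowerSeries.coeff 0 (Cb b φ + b₁) := by
  rw [map_add]
  simp [Cm1, Cb, hb₁]

lemma coeff_one_eq (b b₁ φ : PowerSeries ℂ) (hb : PowerSeries.coeff 0 b = 0)
    (hb₁ : PowerSeries.coeff 1 b₁ = 0) :
    PowerSeries.coeff 1 (Cm1 φ) = PowerSeries.coeff 1 (Cb b φ + b₁) := by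
  rw [map_add]
  simp only [Cm1, Cb, PowerSeries.coeff_mk, hb₁, add_zero]
  rw [show Finset.range 2 = {0, 1} from rfl]
  rw [Finset.sum_insert (by simp), Finset.sum_singleton,
    Finset.sum_insert (by simp), Finset.sum_singleton]
  simp only [Function.iterate_one, Function.iterate_zero, id_eq, pow_zero, pow_one,
    Nat.factorial_zero, Nat.factorial_one, Nat.cast_one, one_mul, inv_one]
  rw [coeff_Dz_succ φ 0, PowerSeries.coeff_mul]
  rw [Finset.Nat.antidiagonal_succ]
  simp [hb, coeff_Dz_zero]

/-- Recursively defined coefficients of the solution. -/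
def seq (b b₁ : PowerSeries ℂ) : ℕ → ℂ
  | 0 => 0
  | m + 1 => ((m : ℂ) + 1)⁻¹ * tail b b₁
      (PowerSeries.mk fun j => if h : j < m + 1 then seq b b₁ j else 0) (m + 2)
termination_by n => n
decreasing_by exact h

/-- if `b ∈ z⁻¹ℂ[[z⁻¹]]` and `b₁ ∈ z⁻²ℂ[[z⁻¹]]`, the equation
`φ(z-1) = φ(z+b(z)) + b₁(z)` has exactly one solution `φ ∈ z⁻¹ℂ[[z⁻¹]]`. -/
theorem statement0 (b b₁ : PowerSeries ℂ)
    (hb : PowerSeries.coeff 0 b = 0)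
    (hb₁ : ∀ n < 2, PowerSeries.coeff n b₁ = 0) :
    ∃! φ : PowerSeries ℂ,
      PowerSeries.coeff 0 φ = 0 ∧ Cm1 φ = Cb b φ + b₁ := by
  set Φ : PowerSeries ℂ := PowerSeries.mk (seq b b₁) with hΦ
  have hΦ0 : PowerSeries.coeff 0 Φ = 0 := by simp [hΦ, seq]
  have htr : ∀ m : ℕ, ∀ j ≤ m,
      PowerSeries.coeff j (PowerSeries.mk fun j => if h : j < m + 1 then seq b b₁ j else 0)
        = PowerSeries.coeff j Φ := by
    intro m j hj
    simp only [hΦ, PowerSeries.coeff_mk]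
    rw [dif_pos (by omega)]
  have key : ∀ m : ℕ, ((m : ℂ) + 1) * PowerSeries.coeff (m + 1) Φ = tail b b₁ Φ (m + 2) := by
    intro m
    have : PowerSeries.coeff (m + 1) Φ = ((m : ℂ) + 1)⁻¹ * tail b b₁ Φ (m + 2) := by
      rw [hΦ, PowerSeries.coeff_mk, seq,
        tail_congr b b₁ _ Φ hb m (htr m)]
    rw [this, ← mul_assoc, mul_inv_cancel₀ (Nat.cast_add_one_ne_zero m), one_mul]
  refine ⟨Φ, ⟨hΦ0, ?_⟩, ?_⟩
  · ext n
    match n with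
    | 0 => exact coeff_zero_eq b b₁ Φ (hb₁ 0 (by norm_num))
    | 1 => exact coeff_one_eq b b₁ Φ hb (hb₁ 1 (by norm_num))
    | m + 2 => exact (coeff_eq_iff b b₁ Φ m).mpr (key m)
  · rintro φ ⟨hφ0, hφeq⟩
    have main : ∀ n, PowerSeries.coeff n φ = seq b b₁ n := by
      intro n
      induction n using Nat.strong_induction_on with
      | _ n ih =>
        match n with
        | 0 => rw [hφ0]; simp [seq]
        | m + 1 =>
          have e := (coeff_eq_iff b b₁ φ m).mp (by rw [hφeq])
          have ht : tail b b₁ φ (m + 2) = tail b b₁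
              (PowerSeries.mk fun j => if h : j < m + 1 then seq b b₁ j else 0) (m + 2) := by
            refine tail_congr b b₁ _ _ hb m fun j hj => ?_
            rw [PowerSeries.coeff_mk, dif_pos (by omega), ih j (by omega)]
          rw [seq, ← ht, ← e, ← mul_assoc,
            inv_mul_cancel₀ (Nat.cast_add_one_ne_zero m), one_mul]
    ext n
    rw [main n, hΦ, PowerSeries.coeff_mk]
end
end

section
/- Let b ∈ z⁻¹ℂ[[z⁻¹]]. For every φ ∈ ℂ[[z⁻¹]], the series of formal series Σ_{k≥1} (1/k!) b^k (d/dz)^k φ is formally convergent and its sum equals Bφ := C_{id+b}φ − φ = φ(z+b(z)) − φ(z); moreover B increases the order in z⁻¹ by at least two units: if φ ∈ z^{−m−1}ℂ[[z⁻¹]] then Bφ ∈ z^{−m−3}ℂ[[z⁻¹]]. -/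
open Finset
open scoped Real

noncomputable section

lemma Xpow_dvd_of_order {M : ℕ} {ψ : PowerSeries ℂ}
    (h : ∀ n < M, PowerSeries.coeff n ψ = 0) :
    (PowerSeries.X : PowerSeries ℂ) ^ M ∣ ψ :=
  (PowerSeries.X_pow_dvd_iff).2 h

lemma coeff_mul_pow_eq_zero {b ψ : PowerSeries ℂ}
    (hb : PowerSeries.coeff 0 b = 0) (k n : ℕ) (hn : n < k) :
    PowerSeries.coeff n (b ^ k * ψ) = 0 := by
  have hX : (PowerSeries.X : PowerSeries ℂ) ∣ b := by
    rw [PowerSeries.X_dvd_iff, ← PowerSeries.coeff_zero_eq_constantCoeff_apply]; exact hb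
  have : (PowerSeries.X : PowerSeries ℂ) ^ k ∣ b ^ k * ψ :=
    dvd_mul_of_dvd_left (pow_dvd_pow_of_dvd hX k) ψ
  exact (PowerSeries.X_pow_dvd_iff.1 this) n hn

lemma order_Dz {M : ℕ} {ψ : PowerSeries ℂ}
    (h : ∀ n < M, PowerSeries.coeff n ψ = 0) :
    ∀ n < M + 1, PowerSeries.coeff n (Dz ψ) = 0 := by
  intro n hn
  cases n with
  | zero => simp [Dz]
  | succ m =>
    simp only [Dz, PowerSeries.coeff_mk]
    rw [h m (by omega)]
    ring

lemma order_Dz_iter {ψ : PowerSeries ℂ} (k : ℕ) {M : ℕ}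
    (h : ∀ n < M, PowerSeries.coeff n ψ = 0) :
    ∀ n < M + k, PowerSeries.coeff n (Dz^[k] ψ) = 0 := by
  induction k with
  | zero => simpa using h
  | succ k ih =>
    intro n hn
    rw [Function.iterate_succ_apply']
    exact order_Dz ih n (by omega)

/-- for `b ∈ z⁻¹ℂ[[z⁻¹]]` and any `φ ∈ ℂ[[z⁻¹]]`, the series
`Σ_{k≥1} (1/k!) b^k (d/dz)^k φ` is formally convergent (each coefficient receives
only finitely many nonzero contributions) with sum `Bφ := C_{id+b}φ - φ`
(coefficientwise, the `n`-th coefficient of `Bφ` is the finite sum over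
`1 ≤ k ≤ n`); moreover `B` increases the order by at least two units:
`φ ∈ z^{-m-1}ℂ[[z⁻¹]]  ⟹  Bφ ∈ z^{-m-3}ℂ[[z⁻¹]]`. -/
theorem statement4 (b : PowerSeries ℂ) (hb : PowerSeries.coeff 0 b = 0)
    (φ : PowerSeries ℂ) :
    (∀ n : ℕ, {k : ℕ | k ≥ 1 ∧
      PowerSeries.coeff n ((Nat.factorial k : ℂ)⁻¹ • (b ^ k * Dz^[k] φ)) ≠ 0}.Finite) ∧
    (∀ n : ℕ, PowerSeries.coeff n (Cb b φ - φ) =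
      ∑ k ∈ Finset.Icc 1 n,
        (Nat.factorial k : ℂ)⁻¹ * PowerSeries.coeff n (b ^ k * Dz^[k] φ)) ∧
    (∀ m : ℕ, (∀ n < m + 1, PowerSeries.coeff n φ = 0) →
      ∀ n < m + 3, PowerSeries.coeff n (Cb b φ - φ) = 0) := by

  have hbk : ∀ k n : ℕ, n < k → ∀ ψ, PowerSeries.coeff n (b ^ k * ψ) = 0 :=
    fun k n hn ψ => coeff_mul_pow_eq_zero hb k n hn
  have hsum : ∀ n : ℕ, PowerSeries.coeff n (Cb b φ - φ) =
      ∑ k ∈ Finset.Icc 1 n,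
        (Nat.factorial k : ℂ)⁻¹ * PowerSeries.coeff n (b ^ k * Dz^[k] φ) := by
    intro n
    rw [map_sub]
    simp only [Cb, PowerSeries.coeff_mk]
    rw [Finset.range_eq_Ico, Finset.sum_eq_sum_Ico_succ_bot (by omega)]
    simp only [pow_zero, one_mul, Function.iterate_zero, id_eq, Nat.factorial_zero,
      Nat.cast_one, inv_one]
    rw [Finset.Ico_add_one_right_eq_Icc]
    ring
  refine ⟨?_, hsum, ?_⟩
  · intro n
    apply Set.Finite.subset (Set.finite_Icc 1 n)
    rintro k ⟨hk1, hk⟩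
    simp only [Set.mem_Icc]
    refine ⟨hk1, ?_⟩
    by_contra hkn
    apply hk
    rw [map_smul, hbk k n (by omega) _, smul_zero]
  · intro m hφ n hn
    rw [hsum n]
    apply Finset.sum_eq_zero
    intro k hk
    simp only [Finset.mem_Icc] at hk
    rcases lt_or_ge n k with h | h
    · rw [hbk k n h, mul_zero]
    · have hDz := order_Dz_iter k hφ
      have : PowerSeries.coeff n (b ^ k * Dz^[k] φ) = 0 := by
        rw [PowerSeries.coeff_mul]
        apply Finset.sum_eq_zero
        rintro ⟨i, j⟩ hij
        rw [Finset.HasAntidiagonal.mem_antidiagonal] at hij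
        rcases lt_or_ge i k with hi | hi
        · have : PowerSeries.coeff i (b ^ k) = 0 := by
            have := coeff_mul_pow_eq_zero hb k i hi (ψ := 1)
            simpa using this
          simp [this]
        · have hj : j < m + 1 + k := by omega
          rw [hDz j hj, mul_zero]
      rw [this, mul_zero]
end
end

section
/- Let ρ ∈ ℂ, 0 < δ' < δ < π/2, and let v be holomorphic on 𝒫⁺_{R,δ} of the form v(z) = z + ρ Log⁺ z + φ(z), where φ and its derivative satisfy |φ(z)| ≤ K|z|⁻¹ and |φ'(z)| ≤ K|z|⁻² on 𝒫⁺_{R,δ} for some K > 0. Then there exists R₂ ≥ R such that v is injective on 𝒫⁺_{R₂,δ}, and there exists R' > 0 such that the image v(𝒫⁺_{R₂,δ}) contains 𝒫⁺_{R',δ'}. -/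
open Finset
open scoped Real NNReal

noncomputable section

/-- The sector `𝒫⁺_{R,δ} = {r e^{iθ} : r > R, -π/2-δ < θ < π/2+δ}`. -/
def Pp (R δ : ℝ) : Set ℂ := {z : ℂ | R < ‖z‖ ∧ |Complex.arg z| < Real.pi / 2 + δ}

/-- The sector `𝒫⁻_{R,δ} = {r e^{iθ} : r > R, π/2-δ < θ < 3π/2+δ}`. -/
def Pm (R δ : ℝ) : Set ℂ := {z : ℂ | -z ∈ Pp R δ}

lemma cos_pi2_add (x : ℝ) : Real.cos (Real.pi/2 + x) = -Real.sin x := by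
  rw [Real.cos_add]; simp

lemma re_eq_norm_cos {z : ℂ} (hz : z ≠ 0) : z.re = ‖z‖ * Real.cos (Complex.arg z) := by
  rw [Complex.cos_arg hz, mul_div_assoc', mul_comm, mul_div_assoc,
    div_self, mul_one]
  exact norm_ne_zero_iff.mpr hz

lemma norm_sq_eq (z : ℂ) : ‖z‖ ^ 2 = z.re ^ 2 + z.im ^ 2 := by
  rw [Complex.sq_norm, Complex.normSq_apply]; ring

/-- characterization of the angle condition by `re`. -/
lemma mem_Pp_iff {R δ : ℝ} (hδ0 : 0 < δ) (hδ : δ < Real.pi/2) (hR : 0 ≤ R) (z : ℂ) :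
    z ∈ Pp R δ ↔ R < ‖z‖ ∧ -Real.sin δ * ‖z‖ < z.re := by
  have hπ := Real.pi_pos
  constructor
  · rintro ⟨h1, h2⟩
    refine ⟨h1, ?_⟩
    have hz : z ≠ 0 := by
      intro h; rw [h] at h1; simp at h1; linarith
    have hzn : (0:ℝ) < ‖z‖ := lt_of_le_of_lt hR h1
    have hcos : Real.cos (Real.pi/2 + δ) < Real.cos (Complex.arg z) := by
      rw [← Real.cos_abs (Complex.arg z)]
      apply Real.strictAntiOn_cos ⟨abs_nonneg _, (Complex.abs_arg_le_pi z)⟩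
        ⟨by linarith, by linarith⟩ h2
    rw [cos_pi2_add] at hcos
    rw [re_eq_norm_cos hz]; nlinarith
  · rintro ⟨h1, h2⟩
    refine ⟨h1, ?_⟩
    have hz : z ≠ 0 := by
      intro h; rw [h] at h1; simp at h1; linarith
    have hzn : (0:ℝ) < ‖z‖ := lt_of_le_of_lt hR h1
    by_contra hcon
    push_neg at hcon
    have : Real.cos |Complex.arg z| ≤ Real.cos (Real.pi/2 + δ) :=
      Real.cos_le_cos_of_nonneg_of_le_pi (by linarith) (Complex.abs_arg_le_pi z) hcon
    rw [cos_pi2_add, Real.cos_abs] at this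
    rw [re_eq_norm_cos hz] at h2
    nlinarith

/-- second characterization: half-plane form. -/
lemma cone_iff {δ : ℝ} (hδ0 : 0 < δ) (hδ : δ < Real.pi/2) (z : ℂ) (hz : z ≠ 0) :
    -Real.sin δ * ‖z‖ < z.re ↔ 0 < Real.cos δ * z.re + Real.sin δ * |z.im| := by
  have hs : 0 < Real.sin δ := Real.sin_pos_of_pos_of_lt_pi hδ0 (by linarith [Real.pi_pos])
  have hc : 0 < Real.cos δ := Real.cos_pos_of_mem_Ioo ⟨by linarith, hδ⟩
  have hsc : Real.sin δ ^ 2 + Real.cos δ ^ 2 = 1 := Real.sin_sq_add_cos_sq δ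
  have hn : (0:ℝ) < ‖z‖ := norm_pos_iff.mpr hz
  have hn2 : ‖z‖ ^ 2 = z.re ^ 2 + z.im ^ 2 := norm_sq_eq z
  have him : |z.im| ^ 2 = z.im ^ 2 := sq_abs _
  constructor
  · intro h
    rcases le_or_gt 0 z.re with hre | hre
    · rcases eq_or_ne z.im 0 with h0 | h0
      · have hre' : z.re ≠ 0 := by
          intro h'; exact hz (Complex.ext h' h0)
        have : 0 < z.re := lt_of_le_of_ne hre (Ne.symm hre')
        have : 0 ≤ Real.sin δ * |z.im| := by positivity
        nlinarith
      · have : 0 < |z.im| := abs_pos.mpr h0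
        nlinarith
    · have h1 : -z.re < Real.sin δ * ‖z‖ := by linarith
      have h2 : (-z.re)^2 < (Real.sin δ * ‖z‖)^2 := pow_lt_pow_left₀ h1 (by linarith) two_ne_zero
      have h3 : (Real.cos δ * -z.re)^2 < (Real.sin δ * |z.im|)^2 := by nlinarith
      have h4 : Real.cos δ * -z.re < Real.sin δ * |z.im| :=
        lt_of_pow_lt_pow_left₀ 2 (by positivity) h3
      linarith
  · intro h
    rcases le_or_gt 0 z.re with hre | hre
    · nlinarith
    · have h4 : Real.cos δ * -z.re < Real.sin δ * |z.im| := by linarith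
      have h5 : (Real.cos δ * -z.re)^2 < (Real.sin δ * |z.im|)^2 :=
        pow_lt_pow_left₀ h4 (by nlinarith) two_ne_zero
      have h6 : (-z.re)^2 < (Real.sin δ * ‖z‖)^2 := by nlinarith
      have h7 : -z.re < Real.sin δ * ‖z‖ := lt_of_pow_lt_pow_left₀ 2 (by positivity) h6
      linarith

lemma Pp_mono {R R' δ : ℝ} (h : R' ≤ R) : Pp R δ ⊆ Pp R' δ :=
  fun _ hz => ⟨lt_of_le_of_lt h hz.1, hz.2⟩

lemma Pp_ne_zero {R δ : ℝ} (hR : 0 ≤ R) {z : ℂ} (hz : z ∈ Pp R δ) : z ≠ 0 := by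
  intro h; have := hz.1; rw [h] at this; simp at this; linarith

lemma isOpen_Pp {R δ : ℝ} (hδ0 : 0 < δ) (hδ : δ < Real.pi/2) (hR : 0 < R) :
    IsOpen (Pp R δ) := by
  have : Pp R δ = {z : ℂ | R < ‖z‖} ∩ {z : ℂ | 0 < Real.cos δ * z.re + Real.sin δ * |z.im|} := by
    ext z
    constructor
    · intro hz
      have hz0 : z ≠ 0 := Pp_ne_zero hR.le hz
      have := (mem_Pp_iff hδ0 hδ hR.le z).mp hz
      exact ⟨this.1, (cone_iff hδ0 hδ z hz0).mp this.2⟩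
    · rintro ⟨h1, h2⟩
      have hz0 : z ≠ 0 := by
        intro h; rw [h] at h1; simp at h1; linarith
      exact (mem_Pp_iff hδ0 hδ hR.le z).mpr ⟨h1, (cone_iff hδ0 hδ z hz0).mpr h2⟩
  rw [this]
  apply IsOpen.inter
  · exact isOpen_lt continuous_const continuous_norm
  · apply isOpen_lt continuous_const
    fun_prop

lemma Pp_subset_slitPlane {R δ : ℝ} (hδ0 : 0 < δ) (hδ : δ < Real.pi/2) (hR : 0 < R)
    {z : ℂ} (hz : z ∈ Pp R δ) : z ∈ Complex.slitPlane := by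
  have hz0 : z ≠ 0 := Pp_ne_zero hR.le hz
  have h2 := (cone_iff hδ0 hδ z hz0).mp ((mem_Pp_iff hδ0 hδ hR.le z).mp hz).2
  have hs : 0 < Real.sin δ := Real.sin_pos_of_pos_of_lt_pi hδ0 (by linarith [Real.pi_pos])
  have hc : 0 < Real.cos δ := Real.cos_pos_of_mem_Ioo ⟨by linarith, hδ⟩
  rcases eq_or_ne z.im 0 with h0 | h0
  · left
    rw [h0] at h2; simp at h2
    nlinarith
  · right; exact h0

lemma log_diff_bound {R₂ a b : ℝ} (hR : 0 < R₂) (ha : R₂ < a) (hb : R₂ < b) :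
    |Real.log a - Real.log b| ≤ |a - b| / R₂ := by
  have key : ∀ x y : ℝ, R₂ < x → R₂ < y → y ≤ x → Real.log x - Real.log y ≤ (x - y) / R₂ := by
    intro x y hx hy hxy
    have hy0 : 0 < y := lt_trans hR hy
    have hx0 : 0 < x := lt_trans hR hx
    have h1 : Real.log x - Real.log y = Real.log (x / y) := (Real.log_div hx0.ne' hy0.ne').symm
    have h2 : Real.log (x / y) ≤ x / y - 1 := Real.log_le_sub_one_of_pos (by positivity)
    have h3 : x / y - 1 = (x - y) / y := by field_simp
    have h4 : (x - y) / y ≤ (x - y) / R₂ := by gcongr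
    linarith
  rcases le_total b a with h | h
  · have h1 := key a b ha hb h
    have h2 : Real.log b ≤ Real.log a := Real.log_le_log (lt_trans hR hb) h
    rw [abs_of_nonneg (by linarith), abs_of_nonneg (by linarith)]
    exact h1
  · have h1 := key b a hb ha h
    have h2 : Real.log a ≤ Real.log b := Real.log_le_log (lt_trans hR ha) h
    rw [abs_of_nonpos (by linarith), abs_of_nonpos (by linarith)]
    calc -(Real.log a - Real.log b) = Real.log b - Real.log a := by ring
    _ ≤ (b - a) / R₂ := h1
    _ = -(a-b)/R₂ := by ring

lemma convex_pos {a b t : ℝ} (ha : 0 < a) (hb : 0 < b) (ht0 : 0 ≤ t) (ht1 : t ≤ 1) :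
    0 < (1-t)*a + t*b := by
  nlinarith [mul_pos ha hb, mul_nonneg (sub_nonneg.mpr ht1) (sq_nonneg a),
    mul_nonneg ht0 (sq_nonneg b)]

lemma im_large {s c : ℝ} (hs : 0 < s) (hc : 0 < c) (hsc : s^2 + c^2 = 1) (z : ℂ)
    (h1 : c * z.re ≤ s * z.im) (h2 : -(s * z.im) ≤ c * z.re) (him : 0 ≤ z.im) :
    c * ‖z‖ ≤ z.im := by
  have q1 : (c*z.re)^2 ≤ (s*z.im)^2 := sq_le_sq' (by linarith) h1
  have q2 : c^2*z.re^2 ≤ s^2*z.im^2 := by nlinarith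
  have q3 : (c*‖z‖)^2 ≤ z.im^2 := by
    have e1 : (c*‖z‖)^2 = c^2*z.re^2 + c^2*z.im^2 := by
      rw [mul_pow, norm_sq_eq]; ring
    have e2 : s^2*z.im^2 + c^2*z.im^2 = z.im^2 := by linear_combination z.im^2 * hsc
    linarith
  exact le_of_pow_le_pow_left₀ two_ne_zero him q3

lemma segment_subset_Pp {R₂ δ : ℝ} (hδ0 : 0 < δ) (hδ : δ < Real.pi/2) (hR2 : 0 < R₂)
    {z₁ z₂ : ℂ} (hz₁ : z₁ ∈ Pp R₂ δ) (hz₂ : z₂ ∈ Pp R₂ δ)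
    (hdist : ‖z₁ - z₂‖ < 2 * R₂ * Real.cos δ) (hpos : 0 < R₂ - ‖z₁ - z₂‖) :
    segment ℝ z₁ z₂ ⊆ Pp (R₂ - ‖z₁ - z₂‖) δ := by
  have hs : 0 < Real.sin δ := Real.sin_pos_of_pos_of_lt_pi hδ0 (by linarith [Real.pi_pos])
  have hs1 : Real.sin δ ≤ 1 := Real.sin_le_one δ
  have hc : 0 < Real.cos δ := Real.cos_pos_of_mem_Ioo ⟨by linarith, hδ⟩
  have hsc : Real.sin δ ^ 2 + Real.cos δ ^ 2 = 1 := Real.sin_sq_add_cos_sq δ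
  have h₁ := (cone_iff hδ0 hδ z₁ (Pp_ne_zero hR2.le hz₁)).mp ((mem_Pp_iff hδ0 hδ hR2.le z₁).mp hz₁).2
  have h₂ := (cone_iff hδ0 hδ z₂ (Pp_ne_zero hR2.le hz₂)).mp ((mem_Pp_iff hδ0 hδ hR2.le z₂).mp hz₂).2
  have hn₁ : R₂ < ‖z₁‖ := hz₁.1
  have hn₂ : R₂ < ‖z₂‖ := hz₂.1
  rintro u hu
  rw [segment_eq_image] at hu
  obtain ⟨t, ⟨ht0, ht1⟩, rfl⟩ := hu
  set u := (1 - t) • z₁ + t • z₂ with hu_def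
  have hud : u - z₁ = t • (z₂ - z₁) := by rw [hu_def]; module
  have hnu : ‖u - z₁‖ ≤ ‖z₁ - z₂‖ := by
    rw [hud, norm_smul]
    simp only [Real.norm_eq_abs, abs_of_nonneg ht0]
    calc t * ‖z₂ - z₁‖ ≤ 1 * ‖z₂ - z₁‖ :=
          mul_le_mul_of_nonneg_right ht1 (norm_nonneg _)
    _ = ‖z₁ - z₂‖ := by rw [one_mul, norm_sub_rev]
  have hnorm : R₂ - ‖z₁ - z₂‖ < ‖u‖ := by
    have h' : ‖z₁‖ - ‖u‖ ≤ ‖u - z₁‖ := by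
      have := norm_sub_norm_le z₁ u
      rwa [norm_sub_rev] at this
    linarith
  have hu0 : u ≠ 0 := by
    intro h; rw [h, norm_zero] at hnorm; linarith
  refine (mem_Pp_iff hδ0 hδ (by linarith) u).mpr ⟨hnorm, ?_⟩
  rw [cone_iff hδ0 hδ u hu0]
  have hure : u.re = (1 - t) * z₁.re + t * z₂.re := by simp [hu_def]
  have huim : u.im = (1 - t) * z₁.im + t * z₂.im := by simp [hu_def]
  have habs₁ : u.im ≤ |u.im| := le_abs_self _
  have habs₂ : -u.im ≤ |u.im| := neg_le_abs _
  have himd : |z₁.im - z₂.im| ≤ ‖z₁ - z₂‖ := by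
    have := Complex.abs_im_le_norm (z₁ - z₂)
    rw [Complex.sub_im] at this
    exact this
  have upper : 0 < Real.cos δ * z₁.re + Real.sin δ * z₁.im →
      0 < Real.cos δ * z₂.re + Real.sin δ * z₂.im →
      0 < Real.cos δ * u.re + Real.sin δ * |u.im| := by
    intro p₁ p₂
    have hcomb := convex_pos p₁ p₂ ht0 ht1
    have he : Real.cos δ * u.re + Real.sin δ * u.im
        = (1-t)*(Real.cos δ * z₁.re + Real.sin δ * z₁.im)
          + t*(Real.cos δ * z₂.re + Real.sin δ * z₂.im) := by
      rw [hure, huim]; ring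
    have := mul_nonneg hs.le (by linarith : (0:ℝ) ≤ |u.im| - u.im)
    nlinarith
  have lower : 0 < Real.cos δ * z₁.re - Real.sin δ * z₁.im →
      0 < Real.cos δ * z₂.re - Real.sin δ * z₂.im →
      0 < Real.cos δ * u.re + Real.sin δ * |u.im| := by
    intro p₁ p₂
    have hcomb := convex_pos p₁ p₂ ht0 ht1
    have he : Real.cos δ * u.re - Real.sin δ * u.im
        = (1-t)*(Real.cos δ * z₁.re - Real.sin δ * z₁.im)
          + t*(Real.cos δ * z₂.re - Real.sin δ * z₂.im) := by
      rw [hure, huim]; ring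
    have := mul_nonneg hs.le (by linarith : (0:ℝ) ≤ |u.im| + u.im)
    nlinarith
  rcases le_or_gt 0 z₁.im with him₁ | him₁ <;> rcases le_or_gt 0 z₂.im with him₂ | him₂
  · exact upper (by rwa [abs_of_nonneg him₁] at h₁) (by rwa [abs_of_nonneg him₂] at h₂)
  · rw [abs_of_nonneg him₁] at h₁
    rw [abs_of_neg him₂] at h₂
    rcases lt_or_ge 0 (Real.cos δ * z₁.re - Real.sin δ * z₁.im) with hh₁ | hh₁
    · exact lower hh₁ (by linarith)
    · rcases lt_or_ge 0 (Real.cos δ * z₂.re + Real.sin δ * z₂.im) with hh₂ | hh₂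
      · exact upper (by linarith) hh₂
      · exfalso
        have k₁ : Real.cos δ * ‖z₁‖ ≤ z₁.im :=
          im_large hs hc hsc z₁ (by linarith) (by linarith) him₁
        have k₂ : Real.cos δ * ‖z₂‖ ≤ -z₂.im := by
          have := im_large hs hc hsc (-z₂)
            (by rw [Complex.neg_re, Complex.neg_im]; linarith)
            (by rw [Complex.neg_re, Complex.neg_im]; linarith)
            (by rw [Complex.neg_im]; linarith)
          rw [Complex.neg_im, norm_neg] at this
          linarith
        have p₁ : Real.cos δ * R₂ < Real.cos δ * ‖z₁‖ := mul_lt_mul_of_pos_left hn₁ hc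
        have p₂ : Real.cos δ * R₂ < Real.cos δ * ‖z₂‖ := mul_lt_mul_of_pos_left hn₂ hc
        have : z₁.im - z₂.im ≤ |z₁.im - z₂.im| := le_abs_self _
        linarith
  · rw [abs_of_neg him₁] at h₁
    rw [abs_of_nonneg him₂] at h₂
    rcases lt_or_ge 0 (Real.cos δ * z₂.re - Real.sin δ * z₂.im) with hh₂ | hh₂
    · exact lower (by linarith) hh₂
    · rcases lt_or_ge 0 (Real.cos δ * z₁.re + Real.sin δ * z₁.im) with hh₁ | hh₁
      · exact upper hh₁ (by linarith)
      · exfalso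
        have k₂ : Real.cos δ * ‖z₂‖ ≤ z₂.im :=
          im_large hs hc hsc z₂ (by linarith) (by linarith) him₂
        have k₁ : Real.cos δ * ‖z₁‖ ≤ -z₁.im := by
          have := im_large hs hc hsc (-z₁)
            (by rw [Complex.neg_re, Complex.neg_im]; linarith)
            (by rw [Complex.neg_re, Complex.neg_im]; linarith)
            (by rw [Complex.neg_im]; linarith)
          rw [Complex.neg_im, norm_neg] at this
          linarith
        have p₁ : Real.cos δ * R₂ < Real.cos δ * ‖z₁‖ := mul_lt_mul_of_pos_left hn₁ hc
        have p₂ : Real.cos δ * R₂ < Real.cos δ * ‖z₂‖ := mul_lt_mul_of_pos_left hn₂ hc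
        have : -(z₁.im - z₂.im) ≤ |z₁.im - z₂.im| := neg_le_abs _
        linarith
  · rw [abs_of_neg him₁] at h₁
    rw [abs_of_neg him₂] at h₂
    exact lower (by linarith) (by linarith)

lemma norm_clog_sub_le (z₁ z₂ : ℂ) : ‖Complex.log z₁ - Complex.log z₂‖ ≤
    |Real.log ‖z₁‖ - Real.log ‖z₂‖| + |Complex.arg z₁ - Complex.arg z₂| := by
  have h := Complex.norm_le_abs_re_add_abs_im (Complex.log z₁ - Complex.log z₂)
  rw [Complex.sub_re, Complex.sub_im, Complex.log_re, Complex.log_re,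
    Complex.log_im, Complex.log_im] at h
  exact h

lemma norm_clog_le (z : ℂ) : ‖Complex.log z‖ ≤ |Real.log ‖z‖| + Real.pi := by
  have h := Complex.norm_le_abs_re_add_abs_im (Complex.log z)
  rw [Complex.log_re, Complex.log_im] at h
  exact h.trans (add_le_add le_rfl (Complex.abs_arg_le_pi z))

/-- bound for the derivative of the perturbation. -/
lemma pert_deriv_bound {ρ w u : ℂ} {K : ℝ} (hK : 0 < K)
    (hw : ‖w‖ ≤ K * (‖u‖⁻¹)^2) (hu : 2*‖ρ‖ + 2*K + 2 ≤ ‖u‖) :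
    ‖ρ * u⁻¹ + w‖ ≤ 1/2 := by
  have hA : (0:ℝ) ≤ ‖ρ‖ := norm_nonneg ρ
  have hu0 : (0:ℝ) < ‖u‖ := by linarith
  have hu1 : (1:ℝ) ≤ ‖u‖ := by linarith
  have hinv0 : (0:ℝ) ≤ ‖u‖⁻¹ := by positivity
  have hinv1 : ‖u‖⁻¹ ≤ 1 := by
    rw [inv_le_one_iff₀]; right; exact hu1
  have h1 : ‖ρ * u⁻¹‖ = ‖ρ‖ * ‖u‖⁻¹ := by rw [norm_mul, norm_inv]
  have h2 : K * (‖u‖⁻¹)^2 ≤ K * ‖u‖⁻¹ := by nlinarith [mul_nonneg (mul_nonneg hK.le hinv0) (sub_nonneg.mpr hinv1)]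
  have h3 : (‖ρ‖ + K) * ‖u‖⁻¹ ≤ 1/2 := by
    rw [← div_eq_mul_inv, div_le_iff₀ hu0]
    linarith
  calc ‖ρ * u⁻¹ + w‖ ≤ ‖ρ * u⁻¹‖ + ‖w‖ := norm_add_le _ _
  _ ≤ ‖ρ‖ * ‖u‖⁻¹ + K * ‖u‖⁻¹ := by rw [h1]; linarith
  _ = (‖ρ‖ + K) * ‖u‖⁻¹ := by ring
  _ ≤ 1/2 := h3

/-- the ball around a point of the smaller sector lies in the bigger sector. -/
lemma ball_subset_Pp {δ δ' R₂ R' : ℝ} (hδ'0 : 0 < δ') (hδ' : δ' < δ) (hδ : δ < Real.pi/2)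
    (hR2 : 0 < R₂) (hR' : 0 ≤ R') {w : ℂ} (hw : w ∈ Pp R' δ') {d : ℝ} (hd0 : 0 ≤ d)
    (hd2 : 2*d ≤ (Real.sin δ - Real.sin δ')*‖w‖) (hRd : R₂ + d < ‖w‖) :
    Metric.closedBall w d ⊆ Pp R₂ δ := by
  have hδ0 : 0 < δ := lt_trans hδ'0 hδ'
  have hπ := Real.pi_pos
  have hs : 0 < Real.sin δ := Real.sin_pos_of_pos_of_lt_pi hδ0 (by linarith)
  have hs1 : Real.sin δ ≤ 1 := Real.sin_le_one δ
  have hw' := (mem_Pp_iff hδ'0 (by linarith) hR' w).mp hw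
  intro u hu
  rw [Metric.mem_closedBall, dist_eq_norm] at hu
  have hre : |(u - w).re| ≤ ‖u - w‖ := by
    exact Complex.abs_re_le_norm _
  rw [Complex.sub_re] at hre
  have hre' : w.re - d ≤ u.re := by
    have h := abs_le.mp (hre.trans hu)
    linarith [h.1]
  have hnu : ‖w‖ - d ≤ ‖u‖ := by
    have h' : ‖w‖ - ‖u‖ ≤ ‖u - w‖ := by
      have := norm_sub_norm_le w u
      rwa [norm_sub_rev] at this
    linarith
  refine (mem_Pp_iff hδ0 hδ hR2.le u).mpr ⟨by linarith, ?_⟩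
  have h1 : Real.sin δ * (‖w‖ - d) ≤ Real.sin δ * ‖u‖ := mul_le_mul_of_nonneg_left hnu hs.le
  have h2 : Real.sin δ * d ≤ d := mul_le_of_le_one_left hd0 hs1
  nlinarith [hw'.2]

/-- the key growth inequality. -/
lemma log_growth {A K η r : ℝ} (hA : 0 ≤ A) (hK : 0 < K) (hη : 0 < η) (hr : 4 ≤ r)
    (hsq : (2*A + A*(Real.log 2 + Real.pi) + K + 1)/η ≤ Real.sqrt r) :
    A * (Real.log (2*r) + Real.pi) + K ≤ η * r := by
  have hπ := Real.pi_pos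
  have hr0 : (0:ℝ) < r := by linarith
  have hsp : 0 < Real.sqrt r := Real.sqrt_pos.mpr hr0
  have h1 : Real.sqrt r * Real.sqrt r = r := Real.mul_self_sqrt hr0.le
  have hsq1 : 1 ≤ Real.sqrt r := by nlinarith
  have hl2 : (0:ℝ) ≤ Real.log 2 := Real.log_nonneg one_le_two
  have hlogr : Real.log r ≤ 2 * Real.sqrt r := by
    have e : Real.log (Real.sqrt r) = Real.log r / 2 := Real.log_sqrt hr0.le
    have := Real.log_le_sub_one_of_pos hsp
    nlinarith
  have hlog2r : Real.log (2*r) = Real.log 2 + Real.log r := Real.log_mul two_ne_zero hr0.ne'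
  have hCst : 2*A + A*(Real.log 2 + Real.pi) + K + 1 ≤ η * Real.sqrt r := by
    rw [div_le_iff₀ hη] at hsq
    nlinarith
  have step1 : A * (Real.log (2*r) + Real.pi) + K
      ≤ (2*A + A*(Real.log 2 + Real.pi) + K + 1) * Real.sqrt r := by
    rw [hlog2r]
    nlinarith [mul_le_mul_of_nonneg_left hlogr hA,
      mul_nonneg (mul_nonneg hA hl2) (sub_nonneg.mpr hsq1),
      mul_nonneg (mul_nonneg hA hπ.le) (sub_nonneg.mpr hsq1),
      mul_nonneg hK.le (sub_nonneg.mpr hsq1)]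
  calc A * (Real.log (2*r) + Real.pi) + K
      ≤ (2*A + A*(Real.log 2 + Real.pi) + K + 1) * Real.sqrt r := step1
  _ ≤ (η * Real.sqrt r) * Real.sqrt r := mul_le_mul_of_nonneg_right hCst hsp.le
  _ = η * r := by rw [mul_assoc, h1]

set_option maxHeartbeats 1000000 in
/-- let `v(z) = z + ρ Log⁺ z + φ(z)` on `𝒫⁺_{R,δ}` with
`|φ(z)| ≤ K|z|⁻¹` and `|φ'(z)| ≤ K|z|⁻²`.  Then `v` is injective on `𝒫⁺_{R₂,δ}`
for some `R₂ ≥ R`, and its image contains a sector `𝒫⁺_{R',δ'}`. -/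
theorem statement14 (ρ : ℂ) (δ δ' R K : ℝ)
    (hδ'0 : 0 < δ') (hδ' : δ' < δ) (hδ : δ < Real.pi / 2)
    (hR : 0 < R) (hK : 0 < K)
    (φ : ℂ → ℂ) (hφ : DifferentiableOn ℂ φ (Pp R δ))
    (hφb : ∀ z ∈ Pp R δ, ‖φ z‖ ≤ K * ‖z‖⁻¹)
    (hφ' : ∀ z ∈ Pp R δ, ‖deriv φ z‖ ≤ K * (‖z‖⁻¹) ^ 2)
    (v : ℂ → ℂ) (hv : ∀ z ∈ Pp R δ, v z = z + ρ * Complex.log z + φ z) :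
    ∃ R₂ : ℝ, R ≤ R₂ ∧ Set.InjOn v (Pp R₂ δ) ∧
      ∃ R' : ℝ, 0 < R' ∧ Pp R' δ' ⊆ v '' (Pp R₂ δ) := by
  have hδ0 : 0 < δ := lt_trans hδ'0 hδ'
  have hπ := Real.pi_pos
  have hc : 0 < Real.cos δ := Real.cos_pos_of_mem_Ioo ⟨by linarith, hδ⟩
  have hs : 0 < Real.sin δ := Real.sin_pos_of_pos_of_lt_pi hδ0 (by linarith)
  have hA : (0:ℝ) ≤ ‖ρ‖ := norm_nonneg ρ
  -- the injectivity radius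
  set D : ℝ := 4*Real.pi*‖ρ‖ + 4*K + 1 with hDdef
  have hD1 : 1 ≤ D := by
    rw [hDdef]; nlinarith [mul_nonneg hπ.le hA]
  set R₂ : ℝ := R + D + 2*‖ρ‖ + 2*K + 2 + D/Real.cos δ with hR2def
  have hDc : 0 ≤ D / Real.cos δ := by positivity
  have hR2R : R ≤ R₂ := by rw [hR2def]; linarith
  have hR2pos : 0 < R₂ := lt_of_lt_of_le hR hR2R
  have hR2D : R + 2*‖ρ‖ + 2*K + 2 ≤ R₂ - D := by rw [hR2def]; linarith
  have hR2cos : D ≤ R₂ * Real.cos δ := by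
    have h1 : D / Real.cos δ * Real.cos δ = D := div_mul_cancel₀ D hc.ne'
    have h2 : 0 ≤ (R + D + 2*‖ρ‖ + 2*K + 2) * Real.cos δ := by positivity
    rw [hR2def]; nlinarith
  have hR2A : 2*‖ρ‖ ≤ R₂ := by rw [hR2def]; linarith
  have hR21 : 1 ≤ R₂ := by rw [hR2def]; linarith
  have hsub : Pp R₂ δ ⊆ Pp R δ := Pp_mono hR2R
  -- the perturbation g and its derivative
  have hgd : ∀ u ∈ Pp R δ, HasDerivAt (fun z => ρ * Complex.log z + φ z)
      (ρ * u⁻¹ + deriv φ u) u := by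
    intro u hu
    have h1 : HasDerivAt Complex.log u⁻¹ u :=
      Complex.hasDerivAt_log (Pp_subset_slitPlane hδ0 hδ hR hu)
    have h2 : DifferentiableAt ℂ φ u :=
      hφ.differentiableAt ((isOpen_Pp hδ0 hδ hR).mem_nhds hu)
    exact (h1.const_mul ρ).add h2.hasDerivAt
  refine ⟨R₂, hR2R, ?_, ?_⟩
  · -- Injectivity
    intro z₁ hz₁ z₂ hz₂ hveq
    have e₁ := hv z₁ (hsub hz₁)
    have e₂ := hv z₂ (hsub hz₂)
    rw [e₁, e₂] at hveq
    have heq : z₁ - z₂ = (ρ * Complex.log z₂ + φ z₂) - (ρ * Complex.log z₁ + φ z₁) := by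
      linear_combination hveq
    have hn₁ : R₂ < ‖z₁‖ := hz₁.1
    have hn₂ : R₂ < ‖z₂‖ := hz₂.1
    -- preliminary bound on d
    have hlogd : ‖Complex.log z₂ - Complex.log z₁‖ ≤ ‖z₁ - z₂‖ / R₂ + 2*Real.pi := by
      have h1 := norm_clog_sub_le z₂ z₁
      have h2 : |Real.log ‖z₂‖ - Real.log ‖z₁‖| ≤ |‖z₂‖ - ‖z₁‖| / R₂ :=
        log_diff_bound hR2pos hn₂ hn₁
      have h3 : |‖z₂‖ - ‖z₁‖| ≤ ‖z₂ - z₁‖ := abs_norm_sub_norm_le z₂ z₁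
      have h4 : |Complex.arg z₂ - Complex.arg z₁| ≤ 2*Real.pi := by
        have := Complex.abs_arg_le_pi z₁
        have := Complex.abs_arg_le_pi z₂
        have h5 := abs_sub (Complex.arg z₂) (Complex.arg z₁)
        calc |Complex.arg z₂ - Complex.arg z₁| ≤ |Complex.arg z₂| + |Complex.arg z₁| :=
              abs_sub _ _
        _ ≤ 2*Real.pi := by linarith
      have h6 : ‖z₂ - z₁‖ = ‖z₁ - z₂‖ := norm_sub_rev _ _
      have h7 : |‖z₂‖ - ‖z₁‖| / R₂ ≤ ‖z₁ - z₂‖ / R₂ := by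
        gcongr
        rw [← h6]; exact h3
      linarith
    have hφ₁ : ‖φ z₁‖ ≤ K := by
      have := hφb z₁ (hsub hz₁)
      have hi : ‖z₁‖⁻¹ ≤ 1 := by
        rw [inv_le_one_iff₀]; right; linarith
      nlinarith [norm_nonneg (φ z₁)]
    have hφ₂ : ‖φ z₂‖ ≤ K := by
      have := hφb z₂ (hsub hz₂)
      have hi : ‖z₂‖⁻¹ ≤ 1 := by
        rw [inv_le_one_iff₀]; right; linarith
      nlinarith [norm_nonneg (φ z₂)]
    have hd_pre : ‖z₁ - z₂‖ ≤ D - 1 := by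
      have h0 : ‖z₁ - z₂‖ ≤ ‖ρ‖ * ‖Complex.log z₂ - Complex.log z₁‖ + (‖φ z₂‖ + ‖φ z₁‖) := by
        rw [heq]
        calc ‖(ρ * Complex.log z₂ + φ z₂) - (ρ * Complex.log z₁ + φ z₁)‖
            = ‖ρ * (Complex.log z₂ - Complex.log z₁) + (φ z₂ - φ z₁)‖ := by ring_nf
        _ ≤ ‖ρ * (Complex.log z₂ - Complex.log z₁)‖ + ‖φ z₂ - φ z₁‖ := norm_add_le _ _
        _ ≤ ‖ρ‖ * ‖Complex.log z₂ - Complex.log z₁‖ + (‖φ z₂‖ + ‖φ z₁‖) := by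
              rw [norm_mul]
              exact add_le_add le_rfl (norm_sub_le _ _)
      have h1 : ‖ρ‖ * ‖Complex.log z₂ - Complex.log z₁‖
          ≤ ‖ρ‖ * (‖z₁ - z₂‖ / R₂ + 2*Real.pi) := mul_le_mul_of_nonneg_left hlogd hA
      have h2 : ‖ρ‖ * (‖z₁ - z₂‖ / R₂) ≤ ‖z₁ - z₂‖ / 2 := by
        rw [mul_div_assoc', div_le_div_iff₀ hR2pos two_pos]
        nlinarith [mul_nonneg (norm_nonneg (z₁ - z₂)) (by linarith : (0:ℝ) ≤ R₂ - 2*‖ρ‖)]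
      have h3 : ‖ρ‖ * (‖z₁ - z₂‖ / R₂ + 2*Real.pi)
          = ‖ρ‖ * (‖z₁ - z₂‖ / R₂) + 2*Real.pi*‖ρ‖ := by ring
      have : ‖z₁ - z₂‖ ≤ ‖z₁ - z₂‖/2 + 2*Real.pi*‖ρ‖ + 2*K := by linarith
      have : ‖z₁ - z₂‖ ≤ 4*Real.pi*‖ρ‖ + 4*K := by linarith
      linarith
    -- the segment
    have hdD : ‖z₁ - z₂‖ < D := by linarith
    have hseg : segment ℝ z₁ z₂ ⊆ Pp (R₂ - ‖z₁ - z₂‖) δ := by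
      apply segment_subset_Pp hδ0 hδ hR2pos hz₁ hz₂
      · nlinarith
      · nlinarith
    have hsegR : Pp (R₂ - ‖z₁ - z₂‖) δ ⊆ Pp R δ := Pp_mono (by nlinarith)
    -- derivative bound on the segment
    have hbound : ∀ u ∈ segment ℝ z₁ z₂, ‖ρ * u⁻¹ + deriv φ u‖ ≤ 1/2 := by
      intro u hu
      have huP : u ∈ Pp (R₂ - ‖z₁ - z₂‖) δ := hseg hu
      have huP' : u ∈ Pp R δ := hsegR huP
      apply pert_deriv_bound hK (hφ' u huP')
      have : R₂ - ‖z₁ - z₂‖ < ‖u‖ := huP.1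
      nlinarith
    have hder : ∀ u ∈ segment ℝ z₁ z₂,
        HasDerivWithinAt (fun z => ρ * Complex.log z + φ z)
          (ρ * u⁻¹ + deriv φ u) (segment ℝ z₁ z₂) u := by
      intro u hu
      exact (hgd u (hsegR (hseg hu))).hasDerivWithinAt
    have key := (convex_segment z₁ z₂).norm_image_sub_le_of_norm_hasDerivWithin_le
      hder hbound (left_mem_segment ℝ z₁ z₂) (right_mem_segment ℝ z₁ z₂)
    -- key : ‖g z₂ - g z₁‖ ≤ 1/2 * ‖z₂ - z₁‖
    have hfin : ‖z₁ - z₂‖ ≤ 1/2 * ‖z₁ - z₂‖ := by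
      conv_lhs => rw [heq]
      calc ‖(ρ * Complex.log z₂ + φ z₂) - (ρ * Complex.log z₁ + φ z₁)‖
          ≤ 1/2 * ‖z₂ - z₁‖ := key
      _ = 1/2 * ‖z₁ - z₂‖ := by rw [norm_sub_rev]
    have : ‖z₁ - z₂‖ = 0 := by linarith [norm_nonneg (z₁ - z₂)]
    exact sub_eq_zero.mp (norm_eq_zero.mp this)
  · -- Surjectivity onto a smaller sector
    have hss : Real.sin δ' < Real.sin δ :=
      Real.sin_lt_sin_of_lt_of_le_pi_div_two (by linarith) (le_of_lt hδ) hδ'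
    set η : ℝ := min ((Real.sin δ - Real.sin δ')/2) (1/2) with hηdef
    have hη : 0 < η := lt_min (by linarith) (by norm_num)
    have hη2 : η ≤ 1/2 := min_le_right _ _
    have hηs : η ≤ (Real.sin δ - Real.sin δ')/2 := min_le_left _ _
    set Cst : ℝ := 2*‖ρ‖ + ‖ρ‖*(Real.log 2 + Real.pi) + K + 1 with hCdef
    have hCst : 0 < Cst := by
      have hl2 : (0:ℝ) ≤ Real.log 2 := Real.log_nonneg one_le_two
      nlinarith
    refine ⟨max (2*R₂ + 4*‖ρ‖ + 4*K + 8) ((Cst/η)^2 + 4), by positivity, ?_⟩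
    set R' : ℝ := max (2*R₂ + 4*‖ρ‖ + 4*K + 8) ((Cst/η)^2 + 4) with hR'def
    intro w hw
    have hr : R' < ‖w‖ := hw.1
    have hr8 : (8:ℝ) < ‖w‖ := by
      have : 2*R₂ + 4*‖ρ‖ + 4*K + 8 ≤ R' := le_max_left _ _
      linarith
    have hrsq : Cst/η ≤ Real.sqrt ‖w‖ := by
      have h1 : (Cst/η)^2 + 4 ≤ R' := le_max_right _ _
      have h2 : (Cst/η)^2 ≤ ‖w‖ := by nlinarith
      have h3 := Real.sqrt_le_sqrt h2
      rwa [Real.sqrt_sq (by positivity)] at h3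
    set d : ℝ := η * ‖w‖ with hddef
    have hd0 : 0 < d := by positivity
    have hd2 : d ≤ ‖w‖/2 := by
      rw [hddef]
      have := mul_le_mul_of_nonneg_right hη2 (norm_nonneg w)
      linarith
    have hR'2 : 2*R₂ + 4*‖ρ‖ + 4*K + 8 ≤ R' := le_max_left _ _
    have hRd : R₂ + d < ‖w‖ := by linarith
    -- the closed ball
    have hball : Metric.closedBall w d ⊆ Pp R₂ δ := by
      apply ball_subset_Pp hδ'0 hδ' hδ hR2pos (by positivity) hw hd0.le
      · rw [hddef]
        have := mul_le_mul_of_nonneg_right hηs (norm_nonneg w)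
        linarith
      · exact hRd
    have hballR : Metric.closedBall w d ⊆ Pp R δ := fun u hu => hsub (hball hu)
    -- the contraction T
    set T : ℂ → ℂ := fun z => w - (ρ * Complex.log z + φ z) with hTdef
    have hzbounds : ∀ z ∈ Metric.closedBall w d,
        ‖w‖/2 ≤ ‖z‖ ∧ ‖z‖ ≤ 2*‖w‖ := by
      intro z hz
      rw [Metric.mem_closedBall, dist_eq_norm] at hz
      constructor
      · have h' : ‖w‖ - ‖z‖ ≤ ‖z - w‖ := by
          have := norm_sub_norm_le w z
          rwa [norm_sub_rev] at this
        linarith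
      · have h' : ‖z‖ - ‖w‖ ≤ ‖z - w‖ := norm_sub_norm_le z w
        linarith [norm_nonneg w]
    have hmaps : Set.MapsTo T (Metric.closedBall w d) (Metric.closedBall w d) := by
      intro z hz
      have hzb := hzbounds z hz
      have hz1 : (1:ℝ) ≤ ‖z‖ := by linarith [hzb.1]
      have hlog : ‖Complex.log z‖ ≤ Real.log (2*‖w‖) + Real.pi := by
        have h1 := norm_clog_le z
        have h2 : |Real.log ‖z‖| = Real.log ‖z‖ := abs_of_nonneg (Real.log_nonneg hz1)
        have h3 : Real.log ‖z‖ ≤ Real.log (2*‖w‖) := by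
          have hz0 : (0:ℝ) < ‖z‖ := by linarith
          exact Real.log_le_log hz0 hzb.2
        linarith
      have hφz : ‖φ z‖ ≤ K := by
        have h0 := hφb z (hballR hz)
        have hi : ‖z‖⁻¹ ≤ 1 := by
          rw [inv_le_one_iff₀]; right; exact hz1
        calc ‖φ z‖ ≤ K * ‖z‖⁻¹ := h0
        _ ≤ K * 1 := mul_le_mul_of_nonneg_left hi hK.le
        _ = K := mul_one K
      have hTz : ‖T z - w‖ ≤ ‖ρ‖ * (Real.log (2*‖w‖) + Real.pi) + K := by
        have : T z - w = -(ρ * Complex.log z + φ z) := by rw [hTdef]; ring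
        rw [this, norm_neg]
        calc ‖ρ * Complex.log z + φ z‖ ≤ ‖ρ * Complex.log z‖ + ‖φ z‖ := norm_add_le _ _
        _ = ‖ρ‖ * ‖Complex.log z‖ + ‖φ z‖ := by rw [norm_mul]
        _ ≤ ‖ρ‖ * (Real.log (2*‖w‖) + Real.pi) + K := by
              have := mul_le_mul_of_nonneg_left hlog hA
              linarith
      have hgrow : ‖ρ‖ * (Real.log (2*‖w‖) + Real.pi) + K ≤ η * ‖w‖ :=
        log_growth hA hK hη (by linarith) hrsq
      rw [Metric.mem_closedBall, dist_eq_norm]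
      calc ‖T z - w‖ ≤ ‖ρ‖ * (Real.log (2*‖w‖) + Real.pi) + K := hTz
      _ ≤ η * ‖w‖ := hgrow
      _ = d := hddef.symm
    -- Lipschitz bound on the ball
    have hlip : ∀ x ∈ Metric.closedBall w d, ∀ y ∈ Metric.closedBall w d,
        ‖T y - T x‖ ≤ 1/2 * ‖y - x‖ := by
      have hder : ∀ u ∈ Metric.closedBall w d,
          HasDerivWithinAt T (-(ρ * u⁻¹ + deriv φ u)) (Metric.closedBall w d) u := by
        intro u hu
        exact ((hgd u (hballR hu)).const_sub w).hasDerivWithinAt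
      have hbound : ∀ u ∈ Metric.closedBall w d, ‖-(ρ * u⁻¹ + deriv φ u)‖ ≤ 1/2 := by
        intro u hu
        rw [norm_neg]
        apply pert_deriv_bound hK (hφ' u (hballR hu))
        have := (hzbounds u hu).1
        linarith
      intro x hx y hy
      exact (convex_closedBall w d).norm_image_sub_le_of_norm_hasDerivWithin_le
        hder hbound hx hy
    have hlipOn : LipschitzOnWith (1/2 : ℝ≥0) T (Metric.closedBall w d) := by
      apply LipschitzOnWith.of_dist_le_mul
      intro x hx y hy
      rw [dist_eq_norm, dist_eq_norm]
      have := hlip y hy x hx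
      calc ‖T x - T y‖ ≤ 1/2 * ‖x - y‖ := hlip y hy x hx
      _ = ((1/2 : ℝ≥0) : ℝ) * ‖x - y‖ := by norm_num
    have hcontr : ContractingWith (1/2 : ℝ≥0)
        (hmaps.restrict T (Metric.closedBall w d) (Metric.closedBall w d)) := by
      constructor
      · rw [← NNReal.coe_lt_coe]; norm_num
      · intro x y
        exact hlipOn x.2 y.2
    obtain ⟨z₀, hz₀S, hfix, -, -⟩ := hcontr.exists_fixedPoint'
      Metric.isClosed_closedBall.isComplete hmaps (Metric.mem_closedBall_self hd0.le)
      (edist_ne_top _ _)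
    refine ⟨z₀, hball hz₀S, ?_⟩
    have hz₀P : z₀ ∈ Pp R δ := hsub (hball hz₀S)
    rw [hv z₀ hz₀P]
    have hfix' : w - (ρ * Complex.log z₀ + φ z₀) = z₀ := hfix
    linear_combination -hfix'
end
end
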